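/- For every γ ∈ (0,1) there exists a constant C > 0, depending only on γ, such that for all δ ∈ (0,1]: ∫_0^δ (ln(1+1/t))^γ dt ≤ C·δ·(ln(1+1/δ))^γ. -/

import Mathlib

open Real Set MeasureTheory

private lemma rpow_add_le_add_rpow_real {a b γ : ℝ} (ha : 0 ≤ a) (hb : 0 ≤ b)
    (h0 : 0 ≤ γ) (h1 : γ ≤ 1) : (a + b) ^ γ ≤ a ^ γ + b ^ γ := by
  have := NNReal.rpow_add_le_add_rpow a.toNNReal b.toNNReal h0 h1
  have h := NNReal.coe_le_coe.2 this
  push_cast [NNReal.coe_rpow] at h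
  rwa [Real.coe_toNNReal a ha, Real.coe_toNNReal b hb] at h

private lemma neg_log_integrableOn {δ : ℝ} (hδ0 : 0 < δ) (hδ1 : δ ≤ 1) :
    IntegrableOn (fun t : ℝ => -Real.log t) (Set.Ioc (0:ℝ) δ) := by
  have hcont : ContinuousOn (fun t : ℝ => t - t * Real.log t) (Set.Icc 0 δ) :=
    (continuous_id.sub Real.continuous_mul_log).continuousOn
  have hderiv : ∀ t ∈ Set.Ioo (0:ℝ) δ,
      HasDerivAt (fun t : ℝ => t - t * Real.log t) (-Real.log t) t := by
    intro t ht
    have h1 : HasDerivAt (fun t : ℝ => t * Real.log t) (Real.log t + 1) t := by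
      have := (hasDerivAt_id t).mul (Real.hasDerivAt_log (ne_of_gt ht.1))
      refine HasDerivAt.congr_deriv this ?_
      field_simp [ne_of_gt ht.1]
      simp only [id]
      ring
    have := (hasDerivAt_id t).sub h1
    refine HasDerivAt.congr_deriv this ?_
    ring
  have hpos : ∀ t ∈ Set.Ioo (0:ℝ) δ, 0 ≤ -Real.log t := by
    intro t ht
    have : Real.log t ≤ 0 := Real.log_nonpos ht.1.le (ht.2.le.trans hδ1)
    linarith
  exact intervalIntegral.integrableOn_deriv_of_nonneg hcont hderiv hpos

private lemma neg_log_integral {δ : ℝ} (hδ0 : 0 < δ) (hδ1 : δ ≤ 1) :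
    ∫ t in Set.Ioc (0:ℝ) δ, -Real.log t = δ - δ * Real.log δ := by
  have hcont : ContinuousOn (fun t : ℝ => t - t * Real.log t) (Set.Icc 0 δ) :=
    (continuous_id.sub Real.continuous_mul_log).continuousOn
  have hderiv : ∀ t ∈ Set.Ioo (0:ℝ) δ,
      HasDerivWithinAt (fun t : ℝ => t - t * Real.log t) (-Real.log t) (Set.Ioi t) t := by
    intro t ht
    have h1 : HasDerivAt (fun t : ℝ => t * Real.log t) (Real.log t + 1) t := by
      have := (hasDerivAt_id t).mul (Real.hasDerivAt_log (ne_of_gt ht.1))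
      refine HasDerivAt.congr_deriv this ?_
      field_simp [ne_of_gt ht.1]
      simp only [id]
      ring
    have h2 : HasDerivAt (fun t : ℝ => t - t * Real.log t) (-Real.log t) t := by
      have := (hasDerivAt_id t).sub h1
      refine HasDerivAt.congr_deriv this ?_
      ring
    exact h2.hasDerivWithinAt
  have hint : IntervalIntegrable (fun t : ℝ => -Real.log t) volume 0 δ := by
    rw [intervalIntegrable_iff_integrableOn_Ioc_of_le hδ0.le]
    exact neg_log_integrableOn hδ0 hδ1
  have := intervalIntegral.integral_eq_sub_of_hasDeriv_right_of_le hδ0.le hcont hderiv hint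
  rw [intervalIntegral.integral_of_le hδ0.le] at this
  rw [this]
  simp

theorem integral_theta_near_zero (γ : ℝ) (hγ : γ ∈ Set.Ioo (0:ℝ) 1) :
    ∃ C > 0, ∀ δ ∈ Set.Ioc (0:ℝ) 1,
      ∫ t in Set.Ioc (0:ℝ) δ, (Real.log (1 + 1/t)) ^ γ
        ≤ C * δ * (Real.log (1 + 1/δ)) ^ γ := by
  obtain ⟨hγ0, hγ1⟩ := hγ
  have hlog2 : (0:ℝ) < Real.log 2 := Real.log_pos (by norm_num)
  have hlog2γ : (0:ℝ) < Real.log 2 ^ γ := Real.rpow_pos_of_pos hlog2 γ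
  refine ⟨1 + 2 / Real.log 2 ^ γ, by positivity, ?_⟩
  intro δ ⟨hδ0, hδ1⟩
  set L := Real.log (1 + 1/δ) with hLdef
  have hLlog2 : Real.log 2 ≤ L := by
    apply Real.log_le_log (by norm_num)
    have h : (1:ℝ) ≤ 1/δ := by rw [le_div_iff₀ hδ0]; linarith
    linarith
  have hL0 : 0 < L := lt_of_lt_of_le hlog2 hLlog2
  -- the dominating function
  set g : ℝ → ℝ := fun t => (L ^ γ + 1 + Real.log δ) + -Real.log t with hgdef
  have hconst_int : IntegrableOn (fun _ : ℝ => L ^ γ + 1 + Real.log δ) (Set.Ioc (0:ℝ) δ) :=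
    integrableOn_const measure_Ioc_lt_top.ne
  have hlog_int : IntegrableOn (fun t : ℝ => -Real.log t) (Set.Ioc (0:ℝ) δ) :=
    neg_log_integrableOn hδ0 hδ1
  have hg_int : IntegrableOn g (Set.Ioc (0:ℝ) δ) := hconst_int.add hlog_int
  -- pointwise bound
  have hle : ∀ t ∈ Set.Ioc (0:ℝ) δ, (Real.log (1 + 1/t)) ^ γ ≤ g t := by
    intro t ⟨ht0, htδ⟩
    have hx0 : 0 ≤ Real.log δ - Real.log t :=
      sub_nonneg.2 (Real.log_le_log ht0 htδ)
    have hbase : Real.log (1 + 1/t) ≤ L + (Real.log δ - Real.log t) := by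
      have h1 : Real.log (1 + 1/t) = Real.log (t + 1) - Real.log t := by
        rw [← Real.log_div (by linarith) (ne_of_gt ht0)]
        congr 1
        field_simp
      have h2 : L = Real.log (δ + 1) - Real.log δ := by
        rw [hLdef, ← Real.log_div (by positivity) (ne_of_gt hδ0)]
        congr 1
        field_simp
      rw [h1, h2]
      have : Real.log (t + 1) ≤ Real.log (δ + 1) :=
        Real.log_le_log (by linarith) (by linarith)
      linarith
    have hnneg : 0 ≤ Real.log (1 + 1/t) := by
      apply Real.log_nonneg
      have : 0 < 1/t := one_div_pos.2 ht0
      linarith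
    calc (Real.log (1 + 1/t)) ^ γ
        ≤ (L + (Real.log δ - Real.log t)) ^ γ :=
          Real.rpow_le_rpow hnneg hbase hγ0.le
      _ ≤ L ^ γ + (Real.log δ - Real.log t) ^ γ :=
          rpow_add_le_add_rpow_real hL0.le hx0 hγ0.le hγ1.le
      _ ≤ L ^ γ + (1 + (Real.log δ - Real.log t)) := by
          gcongr
          rcases le_total (Real.log δ - Real.log t) 1 with h | h
          · have := Real.rpow_le_one hx0 h hγ0.le
            linarith
          · have : (Real.log δ - Real.log t) ^ γ ≤ (Real.log δ - Real.log t) ^ (1:ℝ) :=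
              Real.rpow_le_rpow_of_exponent_le h hγ1.le
            rw [Real.rpow_one] at this
            linarith
      _ = g t := by rw [hgdef]; ring
  -- integrability of f
  have hf_meas : AEStronglyMeasurable (fun t : ℝ => (Real.log (1 + 1/t)) ^ γ)
      (volume.restrict (Set.Ioc (0:ℝ) δ)) := by
    apply Measurable.aestronglyMeasurable
    exact (Real.continuous_rpow_const hγ0.le).measurable.comp
      (Real.measurable_log.comp (measurable_const.add (measurable_const.div measurable_id)))
  have hf_int : IntegrableOn (fun t : ℝ => (Real.log (1 + 1/t)) ^ γ)
      (Set.Ioc (0:ℝ) δ) := by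
    apply Integrable.mono' hg_int hf_meas
    filter_upwards [ae_restrict_mem measurableSet_Ioc] with t ht
    have hnn : 0 ≤ Real.log (1 + 1/t) := by
      apply Real.log_nonneg
      have : 0 < 1/t := one_div_pos.2 ht.1
      linarith
    rw [Real.norm_of_nonneg (Real.rpow_nonneg hnn γ)]
    exact hle t ht
  -- compute ∫ g
  have hg_val : ∫ t in Set.Ioc (0:ℝ) δ, g t = δ * L ^ γ + 2 * δ := by
    rw [hgdef]
    rw [integral_add hconst_int hlog_int, neg_log_integral hδ0 hδ1, setIntegral_const]
    simp only [Real.volume_Ioc, smul_eq_mul, sub_zero]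
    rw [Real.volume_real_Ioc, sub_zero, max_eq_left hδ0.le]
    ring
  have hmain : ∫ t in Set.Ioc (0:ℝ) δ, (Real.log (1 + 1/t)) ^ γ
      ≤ δ * L ^ γ + 2 * δ := by
    rw [← hg_val]
    exact setIntegral_mono_on hf_int hg_int measurableSet_Ioc hle
  have hlast : δ * L ^ γ + 2 * δ ≤ (1 + 2 / Real.log 2 ^ γ) * δ * L ^ γ := by
    have h1 : Real.log 2 ^ γ ≤ L ^ γ := Real.rpow_le_rpow hlog2.le hLlog2 hγ0.le
    have h2 : 2 * δ ≤ (2 / Real.log 2 ^ γ) * δ * L ^ γ := by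
      rw [div_mul_eq_mul_div, div_mul_eq_mul_div, le_div_iff₀ hlog2γ]
      calc 2 * δ * Real.log 2 ^ γ ≤ 2 * δ * L ^ γ := by gcongr
        _ = 2 * δ * L ^ γ := rfl
    nlinarith [Real.rpow_pos_of_pos hL0 γ]
  linarith
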